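/- Suppose (α_j)_{j≥1} is a nondecreasing sequence of positive reals with α_j^{n-1} ≥ K₁ j for some K₁ > 0 and n ≥ 2, and α_j > α_1 for all j ≥ 2. Then for any ρ > 0 and b > 0, lim_{r→∞} ∑_{j=2}^∞ α_j^{b} (2ρ/r)^{α_j - α_1} = 0. -/

import Mathlib

open Real Filter

/-- Auxiliary: `t ^ s * (1/2) ^ t` is bounded on `(0, ∞)` for `s > 0`. -/
lemma auxA16 (s : ℝ) (hs : 0 < s) :
    ∃ C : ℝ, 0 < C ∧ ∀ t : ℝ, 0 < t → t ^ s * (1/2 : ℝ) ^ t ≤ C := by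
  set k := ⌈s⌉₊ with hkdef
  have hk : 1 ≤ k := Nat.one_le_ceil_iff.2 hs
  set c := Real.log 2 with hc
  have hcpos : 0 < c := Real.log_pos one_lt_two
  refine ⟨max 1 (((k : ℝ)/c)^k), lt_of_lt_of_le one_pos (le_max_left _ _), ?_⟩
  intro t ht
  have hhalf : (1/2 : ℝ) ^ t = (Real.exp (c * t))⁻¹ := by
    have h2 : (2:ℝ) ^ t = Real.exp (c * t) := by
      rw [Real.rpow_def_of_pos (by norm_num : (0:ℝ) < 2)]
    rw [show (1/2 : ℝ) = 2⁻¹ by norm_num, Real.inv_rpow (by norm_num : (0:ℝ) ≤ 2), h2]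
  rcases le_total t 1 with h1 | h1
  · have hA : t ^ s ≤ 1 := Real.rpow_le_one ht.le h1 hs.le
    have hB : (1/2 : ℝ) ^ t ≤ 1 := Real.rpow_le_one (by norm_num) (by norm_num) ht.le
    have : t ^ s * (1/2 : ℝ) ^ t ≤ 1 :=
      mul_le_one₀ hA (Real.rpow_nonneg (by norm_num) t) hB
    exact this.trans (le_max_left _ _)
  · have hts : t ^ s ≤ t ^ (k : ℝ) := Real.rpow_le_rpow_of_exponent_le h1 (Nat.le_ceil s)
    have htk : t ^ (k : ℝ) = t ^ k := Real.rpow_natCast t k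
    have hkne : (k : ℝ) ≠ 0 := by positivity
    have hexp : (c * t / k) ^ k ≤ Real.exp (c * t) := by
      have hnn : 0 ≤ c * t / k := by positivity
      calc (c * t / k) ^ k ≤ (c * t / k + 1) ^ k := by
            apply pow_le_pow_left₀ hnn; linarith
        _ ≤ (Real.exp (c * t / k)) ^ k := by
            apply pow_le_pow_left₀ (by linarith)
            have := Real.add_one_le_exp (c * t / k)
            linarith
        _ = Real.exp ((k : ℝ) * (c * t / k)) := by rw [Real.exp_nat_mul]
        _ = Real.exp (c * t) := by rw [mul_div_cancel₀ _ hkne]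
    have hctk : 0 < (c * t / k) ^ k := by positivity
    have hbound : t ^ k * (Real.exp (c * t))⁻¹ ≤ ((k : ℝ)/c)^k := by
      have h1' : (Real.exp (c * t))⁻¹ ≤ ((c * t / k) ^ k)⁻¹ :=
        inv_anti₀ hctk hexp
      have h2' : t ^ k * ((c * t / k) ^ k)⁻¹ = ((k : ℝ)/c)^k := by
        rw [← div_eq_mul_inv, ← div_pow]
        congr 1
        field_simp
      calc t ^ k * (Real.exp (c * t))⁻¹ ≤ t ^ k * ((c * t / k) ^ k)⁻¹ := by
            apply mul_le_mul_of_nonneg_left h1' (by positivity)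
        _ = ((k : ℝ)/c)^k := h2'
    have : t ^ s * (1/2 : ℝ) ^ t ≤ ((k : ℝ)/c)^k := by
      rw [hhalf]
      calc t ^ s * (Real.exp (c * t))⁻¹ ≤ t ^ (k : ℝ) * (Real.exp (c * t))⁻¹ := by
            apply mul_le_mul_of_nonneg_right hts (by positivity)
        _ = t ^ k * (Real.exp (c * t))⁻¹ := by rw [htk]
        _ ≤ ((k : ℝ)/c)^k := hbound
    exact this.trans (le_max_right _ _)

theorem stmt16 (n : ℕ) (hn : 2 ≤ n) (α : ℕ → ℝ) (K₁ : ℝ) (hK₁ : 0 < K₁)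
    (hmono : Monotone α)
    (hpos : ∀ j, 1 ≤ j → 0 < α j)
    (hlow : ∀ j, 1 ≤ j → K₁ * j ≤ (α j) ^ (n - 1))
    (hgap : ∀ j, 2 ≤ j → α 1 < α j)
    (ρ b : ℝ) (hρ : 0 < ρ) (hb : 0 < b) :
    Filter.Tendsto
      (fun r : ℝ => ∑' j : ℕ, (α (j + 2)) ^ b * (2 * ρ / r) ^ (α (j + 2) - α 1))
      atTop (nhds 0) := by
  have ha1 : 0 < α 1 := hpos 1 le_rfl
  set δ := α 2 - α 1 with hδdef
  have hδ : 0 < δ := sub_pos.2 (hgap 2 le_rfl)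
  have hβpos : ∀ j : ℕ, 0 < α (j + 2) := fun j => hpos _ (by omega)
  have hβge : ∀ j : ℕ, δ ≤ α (j + 2) - α 1 := by
    intro j
    have := hmono (show 2 ≤ j + 2 by omega)
    simp only [hδdef]; linarith
  obtain ⟨C, hC, hCb⟩ := auxA16 (b + 2 * ((n - 1 : ℕ) : ℝ)) (by positivity)
  -- the majorant sequence
  set g : ℕ → ℝ := fun j => α (j + 2) ^ b * (1/2 : ℝ) ^ (α (j + 2) - α 1 - δ/2) with hgdef
  have hgnonneg : ∀ j, 0 ≤ g j := fun j =>
    mul_nonneg (Real.rpow_nonneg (hβpos j).le _) (Real.rpow_nonneg (by norm_num) _)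
  have hgle : ∀ j : ℕ, g j ≤ (C * (2:ℝ) ^ (α 1 + δ/2) / K₁^2) * (1 / ((j:ℝ) + 2)^2) := by
    intro j
    set β := α (j + 2) with hβdef
    have hβ : 0 < β := hβpos j
    -- split off the constant part of the exponent
    have hsplit : (1/2 : ℝ) ^ (β - α 1 - δ/2) = (1/2 : ℝ) ^ β * (2:ℝ) ^ (α 1 + δ/2) := by
      have h1 : (1/2 : ℝ) ^ (β - α 1 - δ/2) = (1/2 : ℝ) ^ β / (1/2 : ℝ) ^ (α 1 + δ/2) := by
        rw [← Real.rpow_sub (by norm_num : (0:ℝ) < 1/2)]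
        ring_nf
      have h2 : (1/2 : ℝ) ^ (α 1 + δ/2) = ((2:ℝ) ^ (α 1 + δ/2))⁻¹ := by
        rw [show (1/2 : ℝ) = 2⁻¹ by norm_num, Real.inv_rpow (by norm_num : (0:ℝ) ≤ 2)]
      rw [h1, h2, division_def, inv_inv]
    have hpow2m : β ^ ((2 * (n-1) : ℕ) : ℝ) = (β ^ (n-1))^2 := by
      rw [Real.rpow_natCast, pow_mul']
    have hKj : (K₁ * ((j:ℝ) + 2))^2 ≤ β ^ ((2 * (n-1) : ℕ) : ℝ) := by
      rw [hpow2m]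
      have hlow' : K₁ * ((j:ℝ) + 2) ≤ β ^ (n - 1) := by
        have := hlow (j + 2) (by omega)
        push_cast at this ⊢
        convert this using 2 <;> ring
      exact pow_le_pow_left₀ (by positivity) hlow' 2
    have hCb' : β ^ b * (1/2:ℝ) ^ β ≤ C / β ^ ((2 * (n-1) : ℕ) : ℝ) := by
      have key : β ^ (b + 2 * ((n - 1 : ℕ) : ℝ)) * (1/2:ℝ) ^ β ≤ C := hCb β hβ
      have hsplitβ : β ^ (b + 2 * ((n - 1 : ℕ) : ℝ))
          = β ^ b * β ^ ((2 * (n-1) : ℕ) : ℝ) := by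
        rw [← Real.rpow_add hβ]
        congr 1
        push_cast
        ring
      rw [hsplitβ] at key
      rw [le_div_iff₀ (by positivity)]
      nlinarith [Real.rpow_nonneg hβ.le b, Real.rpow_nonneg (show (0:ℝ) ≤ 1/2 by norm_num) β,
        Real.rpow_nonneg hβ.le ((2 * (n-1) : ℕ) : ℝ)]
    have hfrac : C / β ^ ((2 * (n-1) : ℕ) : ℝ) ≤ C / (K₁ * ((j:ℝ) + 2))^2 :=
      div_le_div_of_nonneg_left hC.le (by positivity) hKj
    calc g j = (β ^ b * (1/2:ℝ) ^ β) * (2:ℝ) ^ (α 1 + δ/2) := by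
          rw [hgdef]; simp only; rw [hsplit]; try ring
      _ ≤ (C / (K₁ * ((j:ℝ) + 2))^2) * (2:ℝ) ^ (α 1 + δ/2) := by
          apply mul_le_mul_of_nonneg_right (hCb'.trans hfrac) (Real.rpow_nonneg (by norm_num) _)
      _ = (C * (2:ℝ) ^ (α 1 + δ/2) / K₁^2) * (1 / ((j:ℝ) + 2)^2) := by
          rw [mul_pow]; field_simp; try ring
  have hsum2 : Summable (fun j : ℕ => 1 / ((j:ℝ) + 2)^2) := by
    have h0 : Summable (fun j : ℕ => 1 / ((j:ℝ))^2) := by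
      simpa using Real.summable_one_div_nat_pow.mpr (le_refl 2)
    have := (summable_nat_add_iff 2).mpr h0
    convert this using 2 with j
    · rfl
    push_cast
    ring
  have hgsum : Summable g :=
    Summable.of_nonneg_of_le hgnonneg hgle (hsum2.mul_left _)
  set S := ∑' j, g j with hSdef
  -- the squeeze
  have hupper : Tendsto (fun r : ℝ => (2 * ρ / r) ^ (δ/2) * S) atTop (nhds 0) := by
    have h1 : Tendsto (fun r : ℝ => 2 * ρ / r) atTop (nhds 0) :=
      Tendsto.div_atTop tendsto_const_nhds tendsto_id
    have h2 : ContinuousAt (fun x : ℝ => x ^ (δ/2)) 0 :=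
      Real.continuousAt_rpow_const 0 _ (Or.inr (by positivity))
    have h3 : Tendsto (fun r : ℝ => (2 * ρ / r) ^ (δ/2)) atTop (nhds ((0:ℝ) ^ (δ/2))) :=
      h2.tendsto.comp h1
    rw [Real.zero_rpow (by positivity)] at h3
    simpa using h3.mul_const S
  apply squeeze_zero' ?_ ?_ hupper
  · filter_upwards [eventually_ge_atTop (4 * ρ)] with r hr
    have hr0 : 0 < r := by linarith
    have hx0 : 0 ≤ 2 * ρ / r := by positivity
    exact tsum_nonneg fun j =>
      mul_nonneg (Real.rpow_nonneg (hβpos j).le _) (Real.rpow_nonneg hx0 _)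
  · filter_upwards [eventually_ge_atTop (4 * ρ)] with r hr
    have hr0 : 0 < r := by linarith
    set x := 2 * ρ / r with hxdef
    have hx0 : 0 < x := by positivity
    have hx2 : x ≤ 1/2 := by
      rw [hxdef, div_le_div_iff₀ hr0 (by norm_num)]
      linarith
    have hterm : ∀ j : ℕ, α (j + 2) ^ b * x ^ (α (j + 2) - α 1) ≤ x ^ (δ/2) * g j := by
      intro j
      have hD : δ ≤ α (j + 2) - α 1 := hβge j
      have hxsplit : x ^ (α (j + 2) - α 1)
          = x ^ (δ/2) * x ^ (α (j + 2) - α 1 - δ/2) := by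
        rw [← Real.rpow_add hx0]
        ring_nf
      have hxle : x ^ (α (j + 2) - α 1 - δ/2) ≤ (1/2 : ℝ) ^ (α (j + 2) - α 1 - δ/2) :=
        Real.rpow_le_rpow hx0.le hx2 (by linarith)
      calc α (j + 2) ^ b * x ^ (α (j + 2) - α 1)
          = x ^ (δ/2) * (α (j + 2) ^ b * x ^ (α (j + 2) - α 1 - δ/2)) := by
            rw [hxsplit]; ring
        _ ≤ x ^ (δ/2) * (α (j + 2) ^ b * (1/2 : ℝ) ^ (α (j + 2) - α 1 - δ/2)) := by
            apply mul_le_mul_of_nonneg_left _ (Real.rpow_nonneg hx0.le _)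
            exact mul_le_mul_of_nonneg_left hxle (Real.rpow_nonneg (hβpos j).le _)
        _ = x ^ (δ/2) * g j := rfl
    have hmaj : Summable (fun j : ℕ => x ^ (δ/2) * g j) := hgsum.mul_left _
    have hfsum : Summable (fun j : ℕ => α (j + 2) ^ b * x ^ (α (j + 2) - α 1)) :=
      Summable.of_nonneg_of_le
        (fun j => mul_nonneg (Real.rpow_nonneg (hβpos j).le _) (Real.rpow_nonneg hx0.le _))
        hterm hmaj
    calc (∑' j : ℕ, α (j + 2) ^ b * x ^ (α (j + 2) - α 1))
        ≤ ∑' j : ℕ, x ^ (δ/2) * g j := Summable.tsum_le_tsum hterm hfsum hmaj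
      _ = x ^ (δ/2) * S := by rw [tsum_mul_left]
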